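/- arXiv:1712.09602 — 5 statements merged into one kernel-verified Lean document; each statement's English description precedes it below -/
import Mathlib

section
/- Let A be an integer array of size (mp+1)×(np+1), with corner entries a = A[0,0], b = A[0,np], c = A[mp,0], d = A[mp,np]. If A possesses the p×p property (every contiguous p×p subsquare of A has the same sum), then a + d = b + c. -/
private lemma shift_sum (f : ℕ → ℤ) (j p : ℕ) :
    ∑ b ∈ Finset.range p, f (j + 1 + b) =
      ∑ b ∈ Finset.range p, f (j + b) - f j + f (j + p) := by
  have h1 := Finset.sum_range_succ' (fun b => f (j + b)) p
  have h2 := Finset.sum_range_succ (fun b => f (j + b)) p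
  have h3 : ∀ b, f (j + (b + 1)) = f (j + 1 + b) := by
    intro b; congr 1; omega
  simp only [h3] at h1
  simp only [Nat.add_zero] at h1
  linarith [h1, h2]

/-- Lemma: if an (mp+1)×(np+1) integer array has the (contiguous) p×p property,
then opposite corners sum equally: a + d = b + c. -/
theorem stmt_4 (m n p : ℕ) (hm : 0 < m) (hn : 0 < n) (hp : 2 ≤ p)
    (A : ℕ → ℕ → ℤ) (S : ℤ)
    (h : ∀ i j : ℕ, i + p ≤ m * p + 1 → j + p ≤ n * p + 1 →
      ∑ a : Fin p, ∑ b : Fin p, A (i + a) (j + b) = S) :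
    A 0 0 + A (m * p) (n * p) = A 0 (n * p) + A (m * p) 0 := by
  have H : ∀ i j : ℕ, i + p ≤ m * p + 1 → j + p ≤ n * p + 1 →
      ∑ a ∈ Finset.range p, ∑ b ∈ Finset.range p, A (i + a) (j + b) = S := by
    intro i j hi hj
    have := h i j hi hj
    rw [Fin.sum_univ_eq_sum_range (fun a => ∑ b : Fin p, A (i + a) (j + b))] at this
    rw [← this]
    exact Finset.sum_congr rfl fun a _ =>
      (Fin.sum_univ_eq_sum_range (fun b => A (i + a) (j + b)) p).symm
  -- column sums shift by p
  have col : ∀ i j : ℕ, i + p ≤ m * p + 1 → j + 1 + p ≤ n * p + 1 →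
      ∑ a ∈ Finset.range p, A (i + a) (j + p) = ∑ a ∈ Finset.range p, A (i + a) j := by
    intro i j hi hj
    have e1 := H i j hi (by omega)
    have e2 := H i (j + 1) hi hj
    have e3 : ∑ a ∈ Finset.range p, ∑ b ∈ Finset.range p, A (i + a) (j + 1 + b) =
        ∑ a ∈ Finset.range p, (∑ b ∈ Finset.range p, A (i + a) (j + b)
          - A (i + a) j + A (i + a) (j + p)) :=
      Finset.sum_congr rfl fun a _ => shift_sum (A (i + a)) j p
    rw [e2] at e3
    rw [Finset.sum_add_distrib, Finset.sum_sub_distrib, e1] at e3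
    linarith
  -- iterate columns
  have colIter : ∀ i : ℕ, i + p ≤ m * p + 1 →
      ∑ a ∈ Finset.range p, A (i + a) (n * p) = ∑ a ∈ Finset.range p, A (i + a) 0 := by
    intro i hi
    have key : ∀ k : ℕ, k ≤ n →
        ∑ a ∈ Finset.range p, A (i + a) (k * p) = ∑ a ∈ Finset.range p, A (i + a) 0 := by
      intro k
      induction k with
      | zero => simp
      | succ k ih =>
        intro hk
        have hkp : (k + 1) * p = k * p + p := by ring
        rw [hkp, col i (k * p) hi (by nlinarith)]
        exact ih (by omega)
    exact key n le_rfl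
  set D : ℕ → ℤ := fun i => A i (n * p) - A i 0 with hD
  have Dsum : ∀ i : ℕ, i + p ≤ m * p + 1 → ∑ a ∈ Finset.range p, D (i + a) = 0 := by
    intro i hi
    simp only [hD]
    rw [Finset.sum_sub_distrib, colIter i hi, sub_self]
  have Dshift : ∀ i : ℕ, i + 1 + p ≤ m * p + 1 → D (i + p) = D i := by
    intro i hi
    have e1 := Dsum i (by omega)
    have e2 := Dsum (i + 1) hi
    have e3 := shift_sum D i p
    rw [e1, e2] at e3
    linarith
  have key : ∀ k : ℕ, k ≤ m → D (k * p) = D 0 := by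
    intro k
    induction k with
    | zero => simp
    | succ k ih =>
      intro hk
      have hkp : (k + 1) * p = k * p + p := by ring
      rw [hkp, Dshift (k * p) (by nlinarith)]
      exact ih (by omega)
  have := key m le_rfl
  simp only [hD] at this
  linarith
end

section
/- Let A be an integer array of size (mp+1)×(np) with the p×p property. Let a = A[0,0], c = A[mp,0], and let b_1,...,b_{p-1} be the last p−1 entries of the top row (A[0, (n-1)p+1], ..., A[0, np-1]) and d_1,...,d_{p-1} the last p−1 entries of the bottom row. Then a + ∑_{i=1}^{p-1} b_i = c + ∑_{i=1}^{p-1} d_i. -/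
/-- Lemma: if an (mp+1)×(np) integer array has the (contiguous) p×p property, then
a + b_1 + ⋯ + b_{p-1} = c + d_1 + ⋯ + d_{p-1}, where a, c are the first entries of
the top and bottom rows and b_i, d_i are the last p−1 entries of those rows. -/
theorem stmt_5 (m n p : ℕ) (hm : 0 < m) (hn : 0 < n) (hp : 2 ≤ p)
    (A : ℕ → ℕ → ℤ) (S : ℤ)
    (h : ∀ i j : ℕ, i + p ≤ m * p + 1 → j + p ≤ n * p →
      ∑ a : Fin p, ∑ b : Fin p, A (i + a) (j + b) = S) :
    A 0 0 + ∑ i ∈ Finset.Icc 1 (p - 1), A 0 ((n - 1) * p + i) =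
      A (m * p) 0 + ∑ i ∈ Finset.Icc 1 (p - 1), A (m * p) ((n - 1) * p + i) := by
  set g : ℕ → ℕ → ℤ := fun i j => ∑ b ∈ Finset.range p, A i (j + b) with hg
  have h' : ∀ i j : ℕ, i + p ≤ m * p + 1 → j + p ≤ n * p →
      ∑ a ∈ Finset.range p, g (i + a) j = S := by
    intro i j hi hj
    have hh := h i j hi hj
    rw [← hh, ← Fin.sum_univ_eq_sum_range (fun a => g (i + a) j)]
    exact Finset.sum_congr rfl fun a _ =>
      (Fin.sum_univ_eq_sum_range (fun b => A (i + a) (j + b)) p).symm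
  -- vertical periodicity of row-window sums
  have hvert : ∀ i j, i + p ≤ m * p → j + p ≤ n * p → g i j = g (i + p) j := by
    intro i j hi hj
    have h1 := h' i j (by omega) hj
    have h2 := h' (i + 1) j (by omega) hj
    obtain ⟨q, rfl⟩ : ∃ q, p = q + 1 := ⟨p - 1, by omega⟩
    rw [Finset.sum_range_succ'] at h1
    rw [Finset.sum_range_succ] at h2
    have hmatch : ∑ a ∈ Finset.range q, g (i + (a + 1)) j
        = ∑ a ∈ Finset.range q, g (i + 1 + a) j := by
      refine Finset.sum_congr rfl fun a _ => ?_
      have : i + (a + 1) = i + 1 + a := by omega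
      rw [this]
    have e1 : i + 0 = i := by omega
    have e2 : i + 1 + q = i + (q + 1) := by omega
    rw [hmatch, e1] at h1
    rw [e2] at h2
    linarith
  -- iterate m times
  have hiter : ∀ k, k ≤ m → ∀ j, j + p ≤ n * p → g 0 j = g (k * p) j := by
    intro k hk
    induction k with
    | zero => simp
    | succ k ih =>
      intro j hj
      have hb : k * p + p ≤ m * p := by
        have : (k + 1) * p ≤ m * p := Nat.mul_le_mul_right p hk
        linarith [this]
      have e : (k + 1) * p = k * p + p := by ring
      rw [e, ← hvert (k * p) j hb hj]
      exact ih (by omega) j hj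
  -- horizontal shift identity (pure algebra)
  have hhoriz : ∀ (i j : ℕ), g i j - g i (j + 1) = A i j - A i (j + p) := by
    intro i j
    obtain ⟨q, rfl⟩ : ∃ q, p = q + 1 := ⟨p - 1, by omega⟩
    simp only [hg]
    rw [Finset.sum_range_succ' (fun b => A i (j + b)), Finset.sum_range_succ]
    have hmatch : ∑ b ∈ Finset.range q, A i (j + (b + 1))
        = ∑ b ∈ Finset.range q, A i (j + 1 + b) := by
      refine Finset.sum_congr rfl fun b _ => ?_
      have : j + (b + 1) = j + 1 + b := by omega
      rw [this]
    have e2 : j + 1 + q = j + (q + 1) := by omega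
    rw [hmatch, e2]
    simp only [add_zero]
    linarith [hmatch]
  set N := n - 1 with hN
  have hnN : n = N + 1 := by omega
  -- key telescoping: A r 0 - A r (N*p) is the same for r = 0 and r = m*p
  have hterm : ∀ k, k < N →
      A 0 (k * p) - A 0 ((k + 1) * p) = A (m * p) (k * p) - A (m * p) ((k + 1) * p) := by
    intro k hk
    have hj1 : k * p + p ≤ n * p := by
      have : (k + 1) * p ≤ n * p := Nat.mul_le_mul_right p (by omega)
      linarith
    have hj2 : (k * p + 1) + p ≤ n * p := by
      have : (k + 2) * p ≤ n * p := Nat.mul_le_mul_right p (by omega)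
      nlinarith
    have e : (k + 1) * p = k * p + p := by ring
    have t1 := hhoriz 0 (k * p)
    have t2 := hhoriz (m * p) (k * p)
    have g1 := hiter m le_rfl (k * p) hj1
    have g2 := hiter m le_rfl (k * p + 1) hj2
    rw [e]
    linarith
  have key : A 0 0 - A 0 (N * p) = A (m * p) 0 - A (m * p) (N * p) := by
    have t1 := Finset.sum_range_sub' (fun k => A 0 (k * p)) N
    have t2 := Finset.sum_range_sub' (fun k => A (m * p) (k * p)) N
    have heqsum : ∑ k ∈ Finset.range N, (A 0 (k * p) - A 0 ((k + 1) * p))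
        = ∑ k ∈ Finset.range N, (A (m * p) (k * p) - A (m * p) ((k + 1) * p)) :=
      Finset.sum_congr rfl fun k hk => hterm k (Finset.mem_range.mp hk)
    simp only [zero_mul] at t1 t2
    rw [t1, t2] at heqsum
    exact heqsum
  have glast : g 0 (N * p) = g (m * p) (N * p) := by
    apply hiter m le_rfl
    have : (N + 1) * p ≤ n * p := Nat.mul_le_mul_right p (by omega)
    linarith
  -- convert the Icc sums
  have hset : Finset.range p = insert 0 (Finset.Icc 1 (p - 1)) := by
    ext x; simp; omega
  have hconv : ∀ r, ∑ i ∈ Finset.Icc 1 (p - 1), A r (N * p + i) = g r (N * p) - A r (N * p) := by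
    intro r
    have : g r (N * p) = ∑ b ∈ Finset.range p, A r (N * p + b) := rfl
    rw [hset, Finset.sum_insert (by simp)] at this
    simp only [add_zero] at this
    linarith
  rw [hconv 0, hconv (m * p)]
  linarith
end

section
/- Let A be an integer array of size (mp+1)×(np) with the p×p property, and let 1 ≤ k < p. Let a_1,...,a_k be the first k entries of the top row, b_{k+1},...,b_p the last p−k entries of the top row, and c_1,...,c_k, d_{k+1},...,d_p the corresponding entries of the bottom row. Then ∑_{i=1}^{k} a_i + ∑_{j=k+1}^{p} b_j = ∑_{i=1}^{k} c_i + ∑_{j=k+1}^{p} d_j. -/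
/-- Lemma: if an (mp+1)×(np) integer array has the (contiguous) p×p property and
1 ≤ k < p, then (sum of first k entries of top row) + (sum of last p−k entries of
top row) equals the corresponding sum for the bottom row. -/
theorem stmt_6 (m n k p : ℕ) (hm : 0 < m) (hn : 0 < n) (hp : 2 ≤ p)
    (hk1 : 1 ≤ k) (hkp : k < p)
    (A : ℕ → ℕ → ℤ) (S : ℤ)
    (h : ∀ i j : ℕ, i + p ≤ m * p + 1 → j + p ≤ n * p →
      ∑ a : Fin p, ∑ b : Fin p, A (i + a) (j + b) = S) :
    (∑ i ∈ Finset.range k, A 0 i) + (∑ j ∈ Finset.range (p - k), A 0 ((n - 1) * p + k + j)) =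
      (∑ i ∈ Finset.range k, A (m * p) i) +
        (∑ j ∈ Finset.range (p - k), A (m * p) ((n - 1) * p + k + j)) := by
  set R : ℕ → ℕ → ℤ := fun i j => ∑ b ∈ Finset.range p, A i (j + b) with hRdef
  have h' : ∀ i j : ℕ, i + p ≤ m * p + 1 → j + p ≤ n * p →
      ∑ a ∈ Finset.range p, R (i + a) j = S := by
    intro i j hi hj
    have := h i j hi hj
    simp only [hRdef]
    rw [← Fin.sum_univ_eq_sum_range (fun a => ∑ b ∈ Finset.range p, A (i + a) (j + b)) p,
      ← this]
    apply Finset.sum_congr rfl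
    intro a _
    exact (Fin.sum_univ_eq_sum_range (fun b => A (i + a) (j + b)) p).symm
  have add_split : ∀ (f : ℕ → ℤ) (a b : ℕ),
      ∑ i ∈ Finset.range (a + b), f i
        = (∑ i ∈ Finset.range a, f i) + ∑ i ∈ Finset.range b, f (a + i) := by
    intro f a b
    induction b with
    | zero => simp
    | succ b ih =>
        rw [← Nat.add_assoc, Finset.sum_range_succ, ih, Finset.sum_range_succ]
        ring
  have hnp1 : n * p = (n - 1) * p + p := by
    have h0 : n = (n - 1) + 1 := by omega
    calc n * p = ((n - 1) + 1) * p := by rw [← h0]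
      _ = (n - 1) * p + p := Nat.succ_mul _ _
  have hstep : ∀ i j : ℕ, i + 1 + p ≤ m * p + 1 → j + p ≤ n * p →
      R (i + p) j = R i j := by
    intro i j hi hj
    have e1 := h' i j (by omega) hj
    have e2 := h' (i + 1) j hi hj
    have t1 : ∑ a ∈ Finset.range (p + 1), R (i + a) j
        = (∑ a ∈ Finset.range p, R (i + a) j) + R (i + p) j :=
      Finset.sum_range_succ _ p
    have t2 : ∑ a ∈ Finset.range (p + 1), R (i + a) j
        = (∑ a ∈ Finset.range p, R (i + (a + 1)) j) + R (i + 0) j :=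
      Finset.sum_range_succ' _ p
    have t3 : ∑ a ∈ Finset.range p, R (i + (a + 1)) j
        = ∑ a ∈ Finset.range p, R (i + 1 + a) j := by
      apply Finset.sum_congr rfl
      intro a _
      congr 1
      omega
    rw [t3, e2] at t2
    rw [e1] at t1
    simp only [Nat.add_zero] at t2
    linarith [t1, t2]
  have hRm : ∀ j : ℕ, j + p ≤ n * p → R (m * p) j = R 0 j := by
    intro j hj
    have key : ∀ t : ℕ, t ≤ m → R (t * p) j = R 0 j := by
      intro t
      induction t with
      | zero => intro _; simp
      | succ t ih =>
          intro ht
          have h1 : (t + 1) * p = t * p + p := by ring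
          have h2 : t * p + 1 + p ≤ m * p + 1 := by
            have : (t + 1) * p ≤ m * p := Nat.mul_le_mul_right p ht
            omega
          rw [h1, hstep (t * p) j h2 hj, ih (by omega)]
    exact key m le_rfl
  have hblock : ∀ (r s q : ℕ), ∑ i ∈ Finset.range (q * p), A r (s + i)
      = ∑ t ∈ Finset.range q, R r (s + t * p) := by
    intro r s q
    induction q with
    | zero => simp
    | succ q ih =>
        have h1 : (q + 1) * p = q * p + p := by ring
        rw [h1, add_split, ih, Finset.sum_range_succ]
        congr 1
        simp only [hRdef]
        apply Finset.sum_congr rfl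
        intro b _
        congr 1
        omega
  have decomp : ∀ r : ℕ,
      (∑ i ∈ Finset.range k, A r i) + (∑ j ∈ Finset.range (p - k), A r ((n - 1) * p + k + j))
        = (∑ t ∈ Finset.range n, R r (t * p))
          - ∑ t ∈ Finset.range (n - 1), R r (k + t * p) := by
    intro r
    have hnp : n * p = k + ((n - 1) * p + (p - k)) := by omega
    have e1 : ∑ i ∈ Finset.range (n * p), A r i
        = (∑ i ∈ Finset.range k, A r i)
          + ((∑ i ∈ Finset.range ((n - 1) * p), A r (k + i))
             + ∑ i ∈ Finset.range (p - k), A r (k + ((n - 1) * p + i))) := by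
      rw [hnp, add_split, add_split]
    have e2 : ∑ i ∈ Finset.range (n * p), A r i = ∑ t ∈ Finset.range n, R r (t * p) := by
      have := hblock r 0 n
      simpa using this
    have e3 : ∑ i ∈ Finset.range ((n - 1) * p), A r (k + i)
        = ∑ t ∈ Finset.range (n - 1), R r (k + t * p) := hblock r k (n - 1)
    have e4 : ∑ i ∈ Finset.range (p - k), A r (k + ((n - 1) * p + i))
        = ∑ j ∈ Finset.range (p - k), A r ((n - 1) * p + k + j) := by
      apply Finset.sum_congr rfl
      intro i _
      congr 1
      omega
    rw [e2, e3, e4] at e1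
    linarith [e1]
  have inv1 : ∑ t ∈ Finset.range n, R 0 (t * p) = ∑ t ∈ Finset.range n, R (m * p) (t * p) := by
    apply Finset.sum_congr rfl
    intro t ht
    have ht' : t < n := Finset.mem_range.mp ht
    have h2 : (t + 1) * p ≤ n * p := Nat.mul_le_mul_right p (by omega)
    have h3 : (t + 1) * p = t * p + p := Nat.succ_mul _ _
    exact (hRm (t * p) (by omega)).symm
  have inv2 : ∑ t ∈ Finset.range (n - 1), R 0 (k + t * p)
      = ∑ t ∈ Finset.range (n - 1), R (m * p) (k + t * p) := by
    apply Finset.sum_congr rfl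
    intro t ht
    have ht' : t < n - 1 := Finset.mem_range.mp ht
    have h2 : (t + 1) * p ≤ (n - 1) * p := Nat.mul_le_mul_right p (by omega)
    have h3 : (t + 1) * p = t * p + p := Nat.succ_mul _ _
    exact (hRm (k + t * p) (by omega)).symm
  rw [decomp 0, decomp (m * p), inv1, inv2]
end

section
/- Let n be divisible by p and let R be an n×n integer array with the toric p×p property. Then the sum of the entries in any p consecutive entries of a row, ∑_{t=0}^{p-1} r_{i,j+t}, is invariant under shifting the row index by p: ∑_{t=0}^{p-1} r_{i,j+t} = ∑_{t=0}^{p-1} r_{i+p,j+t} (indices mod n). -/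
/-- If an n×n toric integer array has the p×p property (p ∣ n), then the sum of any
p consecutive entries of a row is invariant under shifting the row index by p. -/
theorem stmt_10 (p n : ℕ) (hp : 2 ≤ p) (hn : 0 < n) (hpn : p ∣ n)
    (R : ZMod n → ZMod n → ℤ)
    (h : ∃ S : ℤ, ∀ i j : ZMod n,
      ∑ a : Fin p, ∑ b : Fin p, R (i + (a : ℕ)) (j + (b : ℕ)) = S) :
    ∀ i j : ZMod n,
      ∑ t : Fin p, R i (j + (t : ℕ)) = ∑ t : Fin p, R (i + (p : ℕ)) (j + (t : ℕ)) := by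
  obtain ⟨S, hS⟩ := h
  intro i j
  set g : ℕ → ℤ := fun k => ∑ t : Fin p, R (i + (k : ℕ)) (j + (t : ℕ)) with hg
  have h1 : ∑ a ∈ Finset.range p, g a = S := by
    rw [← hS i j, ← Fin.sum_univ_eq_sum_range]
  have h2 : ∑ a ∈ Finset.range p, g (a + 1) = S := by
    rw [← hS (i + 1) j, ← Fin.sum_univ_eq_sum_range (fun a => g (a + 1))]
    apply Finset.sum_congr rfl
    intro a _
    simp only [hg]
    apply Finset.sum_congr rfl
    intro t _
    congr 1
    push_cast
    ring
  have h3 := Finset.sum_range_succ' g p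
  have h4 := Finset.sum_range_succ g p
  have h5 : g 0 = g p := by omega
  have e0 : g 0 = ∑ t : Fin p, R i (j + (t : ℕ)) := by simp [hg]
  rw [← e0, h5]
end

section
/- For p prime and n divisible by p³, if R is an n×n natural pandiagonal square with the complementary property and toric p×p property (with subsquare sum p²(n²−1)/2), then every column of θ(R) splits into p consecutive segments of n/p entries each summing to n(n²−1)/(2p) (the 1/p column property). -/
set_option maxHeartbeats 1000000


/-- The index swap i = ℓp + m ↦ ī = mp + ℓ on {0,…,p²−1}. -/
def barIdx (p i : ℕ) : ℕ := (i % p) * p + i / p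

/-- The block involution θ on n×n toric arrays: viewing R as a p²×p² array of
blocks of size n/p², [θ(R)]_{i,j} = R_{ī,j̄}. -/
def thetaZ (p n : ℕ) [NeZero n] (R : ZMod n → ZMod n → ℤ) : ZMod n → ZMod n → ℤ :=
  fun i j =>
    let q := n / p ^ 2
    R ((barIdx p (i.val / q) * q + i.val % q : ℕ) : ZMod n)
      ((barIdx p (j.val / q) * q + j.val % q : ℕ) : ZMod n)

private lemma sum_grid19 (g : ℕ → ℤ) (m p : ℕ) :
    ∑ t ∈ Finset.range p, ∑ u ∈ Finset.range m, g (u + t * m)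
      = ∑ v ∈ Finset.range (p * m), g v := by
  induction p with
  | zero => simp
  | succ p ih =>
    rw [Finset.sum_range_succ, ih, Nat.succ_mul, Finset.sum_range_add]
    simp [add_comm, Nat.add_comm]

/-- For p prime with p³ ∣ n, if R is a natural pandiagonal n×n square with the
complementary property and the toric p×p property (subsquare sum p²(n²−1)/2),
then θ(R) has the 1/p column property: each of the p natural segments of n/p
consecutive entries of any column sums to n(n²−1)/(2p). -/
theorem stmt_19 (p n : ℕ) [NeZero n] (hp : p.Prime) (hn : 0 < n) (hpn : p ^ 3 ∣ n)
    (R : ZMod n → ZMod n → ℤ)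
    (hnat : ∀ i j : ZMod n, R i j ∈ Finset.Icc (0 : ℤ) ((n : ℤ) ^ 2 - 1))
    (hinj : Function.Injective (fun x : ZMod n × ZMod n => R x.1 x.2))
    (hpan : ∀ i j : ZMod n,
      ∑ t : Fin n, R (i + (t : ℕ)) (j + (t : ℕ)) = (n : ℤ) * ((n : ℤ) ^ 2 - 1) / 2)
    (hcomp : ∀ i j : ZMod n,
      ∑ t : Fin p, R (i + ((t : ℕ) * (n / p) : ℕ)) (j + ((t : ℕ) * (n / p) : ℕ))
        = (p : ℤ) * ((n : ℤ) ^ 2 - 1) / 2)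
    (hppsq : ∀ i j : ZMod n,
      ∑ a : Fin p, ∑ b : Fin p, R (i + (a : ℕ)) (j + (b : ℕ))
        = (p : ℤ) ^ 2 * ((n : ℤ) ^ 2 - 1) / 2) :
    ∀ c : ZMod n, ∀ s : ℕ,
      ∑ t : Fin (n / p), thetaZ p n R ((s * (n / p) + (t : ℕ) : ℕ) : ZMod n) c
        = (n : ℤ) * ((n : ℤ) ^ 2 - 1) / (2 * (p : ℤ)) := by
  obtain ⟨k, hk⟩ := hpn
  have hp1 : 0 < p := hp.pos
  have hk0 : 0 < k := by
    rcases Nat.eq_zero_or_pos k with h|h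
    · subst h; simp at hk; omega
    · exact h
  set q := p * k with hqdef
  set m := p * q with hmdef
  have hq0 : 0 < q := by rw [hqdef]; positivity
  have hnm : n = p * m := by rw [hk, hmdef, hqdef]; ring
  have hnp : n / p = m := by rw [hnm]; exact Nat.mul_div_cancel_left _ hp1
  have hnq : n / p ^ 2 = q := by
    have h2 : n = p ^ 2 * q := by rw [hnm, hmdef]; ring
    rw [h2]; exact Nat.mul_div_cancel_left _ (by positivity)
  set K : ℤ := (p : ℤ) * ((n : ℤ) ^ 2 - 1) / 2 with hKdef
  set S : ℤ := (n : ℤ) * ((n : ℤ) ^ 2 - 1) / 2 with hSdef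
  -- range versions of the hypotheses
  have hcomp' : ∀ i j : ZMod n,
      ∑ t ∈ Finset.range p, R (i + ((t * m : ℕ) : ZMod n)) (j + ((t * m : ℕ) : ZMod n)) = K := by
    intro i j
    rw [← Fin.sum_univ_eq_sum_range]
    simpa [hnp] using hcomp i j
  have hpan' : ∀ i j : ZMod n,
      ∑ t ∈ Finset.range n, R (i + (t : ZMod n)) (j + (t : ZMod n)) = S := by
    intro i j
    rw [← Fin.sum_univ_eq_sum_range]
    exact hpan i j
  have hppsq' : ∀ i j : ZMod n,
      ∑ a ∈ Finset.range p, ∑ b ∈ Finset.range p,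
        R (i + (a : ZMod n)) (j + (b : ZMod n)) = (p:ℤ)^2 * ((n:ℤ)^2 - 1) / 2 := by
    intro i j
    rw [← Fin.sum_univ_eq_sum_range
      (fun a => ∑ b ∈ Finset.range p, R (i + (a : ZMod n)) (j + (b : ZMod n)))]
    rw [← hppsq i j]
    apply Finset.sum_congr rfl
    intro a _
    rw [← Fin.sum_univ_eq_sum_range]
  -- the p-window column sums are p-periodic in the column
  have hv : ∀ i j : ZMod n,
      ∑ a ∈ Finset.range p, R (i + (a : ZMod n)) (j + ((p:ℕ) : ZMod n))
        = ∑ a ∈ Finset.range p, R (i + (a : ZMod n)) j := by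
    intro i j
    set f : ℕ → ℤ := fun b => ∑ a ∈ Finset.range p, R (i + (a : ZMod n)) (j + (b : ZMod n)) with hf
    have hG : ∀ c : ℕ, ∑ b ∈ Finset.range p, f (c + b) = (p:ℤ)^2 * ((n:ℤ)^2 - 1) / 2 := by
      intro c
      rw [← hppsq' i (j + (c : ZMod n)), Finset.sum_comm]
      apply Finset.sum_congr rfl
      intro b _
      apply Finset.sum_congr rfl
      intro a _
      congr 1
      push_cast
      ring
    have h0 := hG 0
    have h1 := hG 1
    simp only [Nat.zero_add] at h0
    have e1 : ∑ b ∈ Finset.range p, f (1 + b) = ∑ b ∈ Finset.range p, f (b + 1) := by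
      apply Finset.sum_congr rfl; intro b _; rw [Nat.add_comm]
    have e2 := Finset.sum_range_succ' f p
    have e3 := Finset.sum_range_succ f p
    have : f p = f 0 := by rw [e1] at h1; omega
    simpa [hf] using this
  have hvmul : ∀ (i j : ZMod n) (d : ℕ),
      ∑ a ∈ Finset.range p, R (i + (a : ZMod n)) (j + ((p * d : ℕ) : ZMod n))
        = ∑ a ∈ Finset.range p, R (i + (a : ZMod n)) j := by
    intro i j d
    induction d with
    | zero => simp
    | succ d ih =>
      have e : j + ((p * (d+1) : ℕ) : ZMod n) = (j + ((p * d : ℕ) : ZMod n)) + ((p:ℕ) : ZMod n) := by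
        push_cast; ring
      rw [e, hv, ih]
  -- the q-window column sums are p-periodic in the column
  have hW : ∀ (x c : ZMod n) (d : ℕ),
      ∑ u ∈ Finset.range q, R (x + (u : ZMod n)) (c + ((p * d : ℕ) : ZMod n))
        = ∑ u ∈ Finset.range q, R (x + (u : ZMod n)) c := by
    intro x c d
    have hsplit : ∀ c' : ZMod n,
        ∑ u ∈ Finset.range q, R (x + (u : ZMod n)) c'
          = ∑ t ∈ Finset.range k, ∑ a ∈ Finset.range p,
              R ((x + ((t * p : ℕ) : ZMod n)) + (a : ZMod n)) c' := by
      intro c'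
      rw [show q = k * p by rw [hqdef]; ring,
        ← sum_grid19 (fun v => R (x + (v : ZMod n)) c') p k]
      apply Finset.sum_congr rfl; intro t _
      apply Finset.sum_congr rfl; intro a _
      congr 1
      push_cast; ring
    rw [hsplit, hsplit c]
    apply Finset.sum_congr rfl
    intro t _
    exact hvmul _ c d
  -- m * K = S
  have hmK : (m:ℤ) * K = S := by
    calc (m:ℤ) * K = ∑ _u ∈ Finset.range m, K := by
          rw [Finset.sum_const, Finset.card_range, nsmul_eq_mul]
      _ = ∑ u ∈ Finset.range m, ∑ t ∈ Finset.range p,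
            R (((0:ZMod n) + (u : ZMod n)) + ((t * m : ℕ) : ZMod n))
              (((0:ZMod n) + (u : ZMod n)) + ((t * m : ℕ) : ZMod n)) := by
          apply Finset.sum_congr rfl
          intro u _
          exact (hcomp' _ _).symm
      _ = ∑ t ∈ Finset.range p, ∑ u ∈ Finset.range m,
            (fun v : ℕ => R ((0:ZMod n) + (v : ZMod n)) ((0:ZMod n) + (v : ZMod n))) (u + t * m) := by
          rw [Finset.sum_comm]
          apply Finset.sum_congr rfl; intro t _
          apply Finset.sum_congr rfl; intro u _
          have e : ((0:ZMod n) + (u : ZMod n)) + ((t * m : ℕ) : ZMod n)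
              = (0:ZMod n) + ((u + t * m : ℕ) : ZMod n) := by push_cast; ring
          rw [e]
      _ = ∑ v ∈ Finset.range (p * m),
            R ((0:ZMod n) + (v : ZMod n)) ((0:ZMod n) + (v : ZMod n)) := by
          exact sum_grid19 (fun v : ℕ => R ((0:ZMod n) + (v : ZMod n)) ((0:ZMod n) + (v : ZMod n))) m p
      _ = S := by rw [← hnm]; exact hpan' 0 0
  -- the target value equals q * K
  have hfin : (n:ℤ) * ((n:ℤ)^2 - 1) / (2 * (p:ℤ)) = (q:ℤ) * K := by
    have heven : (2:ℤ) ∣ (n:ℤ) * ((n:ℤ)^2 - 1) := by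
      obtain ⟨r, hr⟩ := Int.even_mul_succ_self (n:ℤ)
      exact ⟨((n:ℤ)-1)*r, by linear_combination ((n:ℤ)-1) * hr⟩
    have h2S : 2 * S = (n:ℤ) * ((n:ℤ)^2 - 1) := by
      rw [hSdef]; exact Int.mul_ediv_cancel' heven
    have hmq : (m:ℤ) = (p:ℤ) * (q:ℤ) := by rw [hmdef]; push_cast; ring
    have hkey : (n:ℤ) * ((n:ℤ)^2 - 1) = (2*(p:ℤ)) * ((q:ℤ)*K) := by
      rw [← h2S, ← hmK, hmq]; ring
    rw [hkey, Int.mul_ediv_cancel_left _ (by positivity : (2*(p:ℤ)) ≠ 0)]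
  intro c s
  set c' : ZMod n := ((barIdx p (c.val / q) * q + c.val % q : ℕ) : ZMod n) with hc'
  set A := s % p with hA
  have hsA : A < p := Nat.mod_lt s hp1
  -- per-term evaluation of theta
  have hterm : ∀ j u : ℕ, j < p → u < q →
      thetaZ p n R (((s * m + (u + j * q) : ℕ) : ZMod n)) c
        = R (((j * m + A * q + u : ℕ) : ZMod n)) c' := by
    intro j u hj hu
    have hval : (((s * m + (u + j * q) : ℕ) : ZMod n)).val = u + q * (A * p + j) := by
      rw [ZMod.val_natCast]
      have hs : s * m = (s / p) * n + A * m := by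
        conv_lhs => rw [← Nat.div_add_mod s p]
        rw [hnm]; ring
      have hrw : s * m + (u + j * q) = u + q * (A * p + j) + (s / p) * n := by
        rw [hs, hmdef]; ring
      rw [hrw, Nat.add_mul_mod_self_right]
      apply Nat.mod_eq_of_lt
      have he : q * (A * p + j + 1) = q * (A * p + j) + q := by ring
      have h2 : A * p + j + 1 ≤ p * p := by nlinarith
      have h3 : q * (A * p + j + 1) ≤ q * (p * p) := Nat.mul_le_mul_left q h2
      have h4 : q * (p * p) = n := by rw [hnm, hmdef]; ring
      omega
    have hdiv : (((s * m + (u + j * q) : ℕ) : ZMod n)).val / q = A * p + j := by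
      rw [hval, Nat.add_mul_div_left _ _ hq0, Nat.div_eq_of_lt hu, Nat.zero_add]
    have hmod : (((s * m + (u + j * q) : ℕ) : ZMod n)).val % q = u := by
      rw [hval, Nat.add_mul_mod_self_left, Nat.mod_eq_of_lt hu]
    have hbar : barIdx p (A * p + j) = j * p + A := by
      unfold barIdx
      rw [show A * p + j = p * A + j by ring, Nat.mul_add_mod, Nat.mod_eq_of_lt hj,
        Nat.mul_add_div hp1, Nat.div_eq_of_lt hj, Nat.add_zero]
    show R _ _ = R _ _
    rw [hnq, hdiv, hmod, hbar]
    congr 2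
    rw [hmdef]; ring
  -- main computation
  rw [Fin.sum_univ_eq_sum_range
    (fun t => thetaZ p n R ((s * (n / p) + t : ℕ) : ZMod n) c) (n / p)]
  simp only [hnp]
  rw [hfin]
  calc ∑ t ∈ Finset.range m, thetaZ p n R (((s * m + t : ℕ)) : ZMod n) c
      = ∑ j ∈ Finset.range p, ∑ u ∈ Finset.range q,
          thetaZ p n R (((s * m + (u + j * q) : ℕ)) : ZMod n) c := by
        rw [sum_grid19 (fun t => thetaZ p n R (((s * m + t : ℕ)) : ZMod n) c) q p, ← hmdef]
    _ = ∑ j ∈ Finset.range p, ∑ u ∈ Finset.range q,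
          R ((((j * m + A * q : ℕ) : ZMod n)) + (u : ZMod n)) c' := by
        apply Finset.sum_congr rfl; intro j hj
        apply Finset.sum_congr rfl; intro u hu
        rw [hterm j u (Finset.mem_range.mp hj) (Finset.mem_range.mp hu)]
        congr 1
        push_cast; ring
    _ = ∑ j ∈ Finset.range p, ∑ u ∈ Finset.range q,
          R ((((j * m + A * q : ℕ) : ZMod n)) + (u : ZMod n))
            (c' + ((p * (q * j) : ℕ) : ZMod n)) := by
        apply Finset.sum_congr rfl; intro j _
        exact (hW _ c' (q * j)).symm
    _ = ∑ u ∈ Finset.range q, ∑ j ∈ Finset.range p,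
          R (((((A * q : ℕ) : ZMod n)) + (u : ZMod n)) + ((j * m : ℕ) : ZMod n))
            (c' + ((j * m : ℕ) : ZMod n)) := by
        rw [Finset.sum_comm]
        apply Finset.sum_congr rfl; intro u _
        apply Finset.sum_congr rfl; intro j _
        congr 1
        · push_cast; ring
        · congr 1
          rw [show p * (q * j) = j * m by rw [hmdef]; ring]
    _ = ∑ _u ∈ Finset.range q, K := by
        apply Finset.sum_congr rfl; intro u _
        exact hcomp' _ c'
    _ = (q:ℤ) * K := by rw [Finset.sum_const, Finset.card_range, nsmul_eq_mul]
end
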